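/- Let n ≥ 2, m = n(n−1)/2, and let B ∈ ℝ^{m×n} be the signed vertex-edge incidence matrix of the complete graph on n vertices. For a weight vector w ∈ ℝ^m with nonnegative entries such that the graph with edge weights w is connected, define L(w) = Bᵀ diag(w) B and R(w) = B L(w)⁺ Bᵀ. Then for every coordinate i ∈ {1,…,m}, the function ε ↦ R(w + ε e_i) has right derivative at ε = 0 equal to −R_i R_iᵀ, where R_i denotes the i-th column of R(w). -/

import Mathlib

open Matrix BigOperators Polynomial Filter Topology

/-- The four Penrose conditions characterizing the Moore–Penrose pseudoinverse. -/
def IsMoorePenrose {m k : Type*} [Fintype m] [Fintype k] (M : Matrix m k ℝ)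
    (P : Matrix k m ℝ) : Prop :=
  M * P * M = M ∧ P * M * P = P ∧ (M * P)ᵀ = M * P ∧ (P * M)ᵀ = P * M

/- The Moore–Penrose pseudoinverse `M⁺`: it always exists and is unique, so this
choice-based definition picks out exactly the Moore–Penrose pseudoinverse. -/
open Classical in
noncomputable def pinv {m k : Type*} [Fintype m] [Fintype k] (M : Matrix m k ℝ) :
    Matrix k m ℝ :=
  if h : ∃ P, IsMoorePenrose M P then h.choose else 0

/-- Index type for the unordered pairs `{u,v}`, `u < v`, of vertices of the complete graph
on `n` vertices; there are `n(n-1)/2` of them. -/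
abbrev PairIdx (n : ℕ) := {p : Fin n × Fin n // p.1 < p.2}

/-- The signed vertex-edge incidence matrix `B` of the complete graph on `n` vertices:
the row for the pair `{u,v}` (with `u < v`) is `χ_{u,v} = e_u - e_v`. -/
def incB (n : ℕ) : Matrix (PairIdx n) (Fin n) ℝ :=
  Matrix.of fun p i => (if i = p.1.1 then 1 else 0) - (if i = p.1.2 then 1 else 0)

/-- The entrywise absolute value `|B|` of the incidence matrix `B`. -/
def absB (n : ℕ) : Matrix (PairIdx n) (Fin n) ℝ := (incB n).map fun x => |x|

/-- `L(w) = Bᵀ diag(w) B`, the Laplacian of the weighted graph with edge weights `w`. -/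
noncomputable def Lw {n : ℕ} (w : PairIdx n → ℝ) : Matrix (Fin n) (Fin n) ℝ :=
  (incB n)ᵀ * Matrix.diagonal w * incB n

/-- `R(w) = B L(w)⁺ Bᵀ`, whose diagonal entries are the pairwise effective resistances. -/
noncomputable def Rw {n : ℕ} (w : PairIdx n → ℝ) : Matrix (PairIdx n) (PairIdx n) ℝ :=
  incB n * pinv (Lw w) * (incB n)ᵀ

/-! ### Auxiliary lemmas -/

section Aux

lemma pinv_eq_of {m k : Type*} [Fintype m] [Fintype k] {M : Matrix m k ℝ}
    {P : Matrix k m ℝ} (h : IsMoorePenrose M P) : pinv M = P := by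
  have hex : ∃ P, IsMoorePenrose M P := ⟨P, h⟩
  rw [pinv, dif_pos hex]
  obtain ⟨q1, q2, q3, q4⟩ := hex.choose_spec
  obtain ⟨p1, p2, p3, p4⟩ := h
  set Q := hex.choose with hQdef
  have hMQ : M * Q = M * P := by
    calc M * Q = (M * P * M) * Q := by rw [p1]
    _ = (M * P) * (M * Q) := by rw [Matrix.mul_assoc, Matrix.mul_assoc]
    _ = (M * P)ᵀ * (M * Q)ᵀ := by rw [p3, q3]
    _ = Pᵀ * (M * Q * M)ᵀ := by
          simp only [Matrix.transpose_mul, Matrix.mul_assoc]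
    _ = Pᵀ * Mᵀ := by rw [q1]
    _ = (M * P)ᵀ := by rw [Matrix.transpose_mul]
    _ = M * P := p3
  have hQM : Q * M = P * M := by
    calc Q * M = Q * (M * P * M) := by rw [p1]
    _ = (Q * M) * (P * M) := by simp only [Matrix.mul_assoc]
    _ = (Q * M)ᵀ * (P * M)ᵀ := by rw [p4, q4]
    _ = (M * Q * M)ᵀ * Pᵀ := by
          simp only [Matrix.transpose_mul, Matrix.mul_assoc]
    _ = Mᵀ * Pᵀ := by rw [q1]
    _ = (P * M)ᵀ := by rw [Matrix.transpose_mul]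
    _ = P * M := p4
  calc Q = Q * M * Q := q2.symm
  _ = P * M * Q := by rw [hQM]
  _ = P * (M * P) := by rw [Matrix.mul_assoc, hMQ]
  _ = P := by rw [← Matrix.mul_assoc, p2]

lemma mul_vecMulVec' {l m k : Type*} [Fintype m] (A : Matrix l m ℝ) (u : m → ℝ) (v : k → ℝ) :
    A * vecMulVec u v = vecMulVec (A *ᵥ u) v := by
  ext a b
  simp [Matrix.mul_apply, vecMulVec_apply, Matrix.mulVec, dotProduct, Finset.sum_mul, mul_assoc]

lemma vecMulVec_mul' {l m k : Type*} [Fintype m] (u : l → ℝ) (v : m → ℝ) (A : Matrix m k ℝ) :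
    vecMulVec u v * A = vecMulVec u (Aᵀ *ᵥ v) := by
  ext a b
  simp only [Matrix.mul_apply, vecMulVec_apply, Matrix.mulVec, dotProduct,
    Matrix.transpose_apply, Finset.mul_sum]
  exact Finset.sum_congr rfl fun j _ => by ring

lemma vecMulVec_transpose' {l m : Type*} (u : l → ℝ) (v : m → ℝ) :
    (vecMulVec u v)ᵀ = vecMulVec v u := by
  ext a b; simp [vecMulVec_apply, mul_comm]

lemma smul_vecMulVec {l m : Type*} (r : ℝ) (u : l → ℝ) (v : m → ℝ) :
    vecMulVec (r • u) v = r • vecMulVec u v := by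
  ext a b; simp [vecMulVec_apply, mul_assoc]

lemma penrose_shift {N : Type*} [Fintype N] [DecidableEq N]
    (L Q Jn : Matrix N N ℝ) (b : N → ℝ) (ε c : ℝ)
    (hLs : Lᵀ = L) (hQs : Qᵀ = Q) (hJs : Jnᵀ = Jn)
    (hLQ : L * Q = 1 - Jn)
    (hJL : Jn * L = 0) (hJQ : Jn * Q = 0) (hJb : Jn *ᵥ b = 0)
    (hc : c = b ⬝ᵥ (Q *ᵥ b)) (hne : 1 + ε * c ≠ 0) :
    IsMoorePenrose (L + ε • vecMulVec b b)
      (Q - (ε / (1 + ε * c)) • vecMulVec (Q *ᵥ b) (Q *ᵥ b)) := by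
  set γ := ε / (1 + ε * c) with hγ
  set v := Q *ᵥ b with hv
  have hγc : ε - γ - ε * γ * c = 0 := by
    rw [hγ]; field_simp; ring
  have hLv : L *ᵥ v = b := by
    rw [hv, Matrix.mulVec_mulVec, hLQ, Matrix.sub_mulVec, Matrix.one_mulVec, hJb, sub_zero]
  have hJv : Jn *ᵥ v = 0 := by
    rw [hv, Matrix.mulVec_mulVec, hJQ, Matrix.zero_mulVec]
  have hbv : b ⬝ᵥ v = c := hc.symm
  set U := vecMulVec b b with hU
  set V := vecMulVec v v with hV
  have hUs : Uᵀ = U := vecMulVec_transpose' b b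
  have hVs : Vᵀ = V := vecMulVec_transpose' v v
  set M := L + ε • U with hM
  set P := Q - γ • V with hP
  have hMs : Mᵀ = M := by rw [hM, Matrix.transpose_add, hLs, Matrix.transpose_smul, hUs]
  have hPs : Pᵀ = P := by rw [hP, Matrix.transpose_sub, hQs, Matrix.transpose_smul, hVs]
  have hLV : L * V = vecMulVec b v := by rw [hV, mul_vecMulVec', hLv]
  have hUQ : U * Q = vecMulVec b v := by rw [hU, vecMulVec_mul', hQs, hv]
  have hUV : U * V = c • vecMulVec b v := by
    rw [hU, hV, mul_vecMulVec']
    have : vecMulVec b b *ᵥ v = c • b := by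
      ext a
      simp only [Matrix.mulVec, dotProduct, vecMulVec_apply, Pi.smul_apply, smul_eq_mul]
      rw [← hbv, dotProduct, Finset.sum_mul]
      exact Finset.sum_congr rfl fun j _ => by ring
    rw [this, smul_vecMulVec]
  have hMP : M * P = 1 - Jn := by
    have expand : M * P = L * Q + ε • (U * Q) - γ • (L * V) - (ε * γ) • (U * V) := by
      rw [hM, hP]
      rw [Matrix.add_mul, Matrix.mul_sub, Matrix.mul_sub, Matrix.smul_mul, Matrix.smul_mul,
        Matrix.mul_smul, Matrix.mul_smul, smul_smul]
      abel
    rw [expand, hLQ, hUQ, hLV, hUV, smul_smul]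
    have h2 : ∀ X : Matrix N N ℝ, 1 - Jn + ε • X - γ • X - (ε * γ * c) • X
        = 1 - Jn + (ε - γ - ε * γ * c) • X := fun X => by
      rw [sub_smul, sub_smul]; abel
    rw [h2, hγc, zero_smul, add_zero]
  have hPM : P * M = 1 - Jn := by
    calc P * M = Pᵀ * Mᵀ := by rw [hPs, hMs]
    _ = (M * P)ᵀ := (Matrix.transpose_mul M P).symm
    _ = (1 - Jn)ᵀ := by rw [hMP]
    _ = 1 - Jn := by rw [Matrix.transpose_sub, Matrix.transpose_one, hJs]
  have hJU : Jn * U = 0 := by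
    rw [hU, mul_vecMulVec', hJb]
    ext a b'; simp [vecMulVec_apply]
  have hJV : Jn * V = 0 := by
    rw [hV, mul_vecMulVec', hJv]
    ext a b'; simp [vecMulVec_apply]
  refine ⟨?_, ?_, ?_, ?_⟩
  · rw [hMP, Matrix.sub_mul, Matrix.one_mul]
    rw [hM, Matrix.mul_add, hJL, Matrix.mul_smul, hJU, smul_zero, add_zero, sub_zero]
  · rw [hPM, Matrix.sub_mul, Matrix.one_mul]
    rw [hP, Matrix.mul_sub, hJQ, Matrix.mul_smul, hJV, smul_zero, sub_zero, sub_zero]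
  · rw [hMP, Matrix.transpose_sub, Matrix.transpose_one, hJs]
  · rw [hPM, Matrix.transpose_sub, Matrix.transpose_one, hJs]

noncomputable def Jmat (n : ℕ) : Matrix (Fin n) (Fin n) ℝ := Matrix.of fun _ _ => (n : ℝ)⁻¹

lemma incB_rowsum {n : ℕ} (p : PairIdx n) : ∑ j, incB n p j = 0 := by
  simp [incB, Finset.sum_sub_distrib]

lemma Jmat_transpose {n : ℕ} : (Jmat n)ᵀ = Jmat n := rfl

lemma Jmat_mul_Jmat {n : ℕ} (hn : 0 < n) : Jmat n * Jmat n = Jmat n := by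
  ext a b
  simp [Jmat, Matrix.mul_apply, Finset.sum_const]
  rw [← mul_inv]
  have : (n : ℝ) ≠ 0 := Nat.cast_ne_zero.mpr hn.ne'
  field_simp

lemma incB_mul_Jmat {n : ℕ} : incB n * Jmat n = 0 := by
  ext p j
  simp only [Matrix.mul_apply, Jmat, Matrix.of_apply, Matrix.zero_apply]
  rw [← Finset.sum_mul, incB_rowsum, zero_mul]

lemma Jmat_mulVec_incBrow {n : ℕ} (i : PairIdx n) :
    Jmat n *ᵥ (fun k => incB n i k) = 0 := by
  ext a
  simp only [Matrix.mulVec, dotProduct, Jmat, Matrix.of_apply, Pi.zero_apply]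
  rw [← Finset.mul_sum, incB_rowsum, mul_zero]

lemma Lw_transpose {n : ℕ} (w : PairIdx n → ℝ) : (Lw w)ᵀ = Lw w := by
  rw [Lw, Matrix.transpose_mul, Matrix.transpose_mul, Matrix.transpose_transpose,
    Matrix.diagonal_transpose, Matrix.mul_assoc]

lemma Jmat_mul_incBT {n : ℕ} : Jmat n * (incB n)ᵀ = 0 := by
  have := congrArg Matrix.transpose (incB_mul_Jmat (n := n))
  rw [Matrix.transpose_mul, Jmat_transpose] at this
  simpa using this

lemma Jmat_mul_Lw {n : ℕ} (w : PairIdx n → ℝ) : Jmat n * Lw w = 0 := by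
  rw [Lw, ← Matrix.mul_assoc, ← Matrix.mul_assoc, Jmat_mul_incBT, Matrix.zero_mul,
    Matrix.zero_mul]

lemma Lw_apply {n : ℕ} (w : PairIdx n → ℝ) (u v : Fin n) :
    Lw w u v = ∑ e, w e * (incB n e u * incB n e v) := by
  simp only [Lw, Matrix.mul_apply, Matrix.transpose_apply, Matrix.diagonal_apply,
    mul_ite, mul_zero, Finset.sum_ite_eq', Finset.mem_univ, if_true]
  exact Finset.sum_congr rfl fun e _ => by ring

lemma Lw_add_single {n : ℕ} (w : PairIdx n → ℝ) (i : PairIdx n) (ε : ℝ) :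
    Lw (w + ε • (Pi.single i 1 : PairIdx n → ℝ))
      = Lw w + ε • vecMulVec (fun k => incB n i k) (fun k => incB n i k) := by
  ext u v
  simp only [Matrix.add_apply, Matrix.smul_apply, vecMulVec_apply, Lw_apply, smul_eq_mul]
  have h1 : ∀ e, (w + ε • (Pi.single i 1 : PairIdx n → ℝ)) e * (incB n e u * incB n e v)
      = w e * (incB n e u * incB n e v)
        + (if e = i then ε * (incB n i u * incB n i v) else 0) := by
    intro e
    by_cases he : e = i <;> simp [he, Pi.single_apply] <;> ring
  rw [Finset.sum_congr rfl fun e _ => h1 e, Finset.sum_add_distrib,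
    Finset.sum_ite_eq' Finset.univ i (fun _ => ε * (incB n i u * incB n i v))]
  simp

lemma quad_Lw {n : ℕ} (w : PairIdx n → ℝ) (x : Fin n → ℝ) :
    x ⬝ᵥ (Lw w *ᵥ x) = ∑ e, w e * ((incB n *ᵥ x) e)^2 := by
  rw [Lw, ← Matrix.mulVec_mulVec, ← Matrix.mulVec_mulVec, Matrix.dotProduct_mulVec,
    Matrix.vecMul_transpose]
  simp only [dotProduct, Matrix.mulVec_diagonal]
  exact Finset.sum_congr rfl fun e _ => by ring

lemma quad_Jmat {n : ℕ} (x : Fin n → ℝ) :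
    x ⬝ᵥ (Jmat n *ᵥ x) = (n : ℝ)⁻¹ * (∑ k, x k)^2 := by
  simp only [Matrix.mulVec, dotProduct, Jmat, Matrix.of_apply]
  rw [Finset.sum_congr rfl fun u _ => by rw [← Finset.mul_sum], ← Finset.sum_mul]
  ring

lemma incB_mulVec_apply {n : ℕ} (x : Fin n → ℝ) (e : PairIdx n) :
    (incB n *ᵥ x) e = x e.1.1 - x e.1.2 := by
  simp [incB, Matrix.mulVec, dotProduct, sub_mul, Finset.sum_sub_distrib, Finset.sum_ite_eq',
    ite_mul, zero_mul]

lemma quadA_nonneg {n : ℕ} (w : PairIdx n → ℝ) (hw : ∀ i, 0 ≤ w i) (x : Fin n → ℝ) :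
    0 ≤ x ⬝ᵥ ((Lw w + Jmat n) *ᵥ x) := by
  rw [Matrix.add_mulVec, dotProduct_add, quad_Lw, quad_Jmat]
  have h1 : (0:ℝ) ≤ ∑ e, w e * ((incB n *ᵥ x) e)^2 :=
    Finset.sum_nonneg fun e _ => mul_nonneg (hw e) (sq_nonneg _)
  have h2 : (0:ℝ) ≤ (n : ℝ)⁻¹ * (∑ k, x k)^2 := by positivity
  linarith

lemma A_ker {n : ℕ} (hn : 2 ≤ n) (w : PairIdx n → ℝ) (hw : ∀ i, 0 ≤ w i)
    (hconn : (SimpleGraph.fromRel fun u v => ∃ i : PairIdx n,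
        0 < w i ∧ (s(u, v) : Sym2 (Fin n)) = s(i.1.1, i.1.2)).Connected)
    (x : Fin n → ℝ) (hx : (Lw w + Jmat n) *ᵥ x = 0) : x = 0 := by
  have h0 : x ⬝ᵥ ((Lw w + Jmat n) *ᵥ x) = 0 := by rw [hx, dotProduct_zero]
  rw [Matrix.add_mulVec, dotProduct_add, quad_Lw, quad_Jmat] at h0
  have h1 : (0:ℝ) ≤ ∑ e, w e * ((incB n *ᵥ x) e)^2 :=
    Finset.sum_nonneg fun e _ => mul_nonneg (hw e) (sq_nonneg _)
  have h2 : (0:ℝ) ≤ (n : ℝ)⁻¹ * (∑ k, x k)^2 := by positivity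
  have hz := (add_eq_zero_iff_of_nonneg h1 h2).mp h0
  have hterm : ∀ e ∈ Finset.univ, w e * ((incB n *ᵥ x) e)^2 = 0 :=
    (Finset.sum_eq_zero_iff_of_nonneg fun e _ => mul_nonneg (hw e) (sq_nonneg _)).mp hz.1
  have hedge : ∀ e : PairIdx n, 0 < w e → x e.1.1 = x e.1.2 := by
    intro e hwe
    have := hterm e (Finset.mem_univ e)
    have hd : ((incB n *ᵥ x) e)^2 = 0 := by
      rcases mul_eq_zero.mp this with h | h
      · exact absurd h hwe.ne'
      · exact h
    have := pow_eq_zero_iff (n := 2) (by norm_num) |>.mp hd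
    rw [incB_mulVec_apply] at this
    linarith [sub_eq_zero.mp this]
  have hadj : ∀ u v : Fin n, (SimpleGraph.fromRel fun u v => ∃ i : PairIdx n,
      0 < w i ∧ (s(u, v) : Sym2 (Fin n)) = s(i.1.1, i.1.2)).Adj u v → x u = x v := by
    intro u v huv
    rw [SimpleGraph.fromRel_adj] at huv
    rcases huv.2 with ⟨e, hwe, hs⟩ | ⟨e, hwe, hs⟩
    · rcases Sym2.eq_iff.mp hs with ⟨h1', h2'⟩ | ⟨h1', h2'⟩ <;>
        rw [h1', h2'] <;> [exact hedge e hwe; exact (hedge e hwe).symm]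
    · rcases Sym2.eq_iff.mp hs with ⟨h1', h2'⟩ | ⟨h1', h2'⟩ <;>
        rw [h1', h2'] <;> [exact (hedge e hwe).symm; exact hedge e hwe]
  have hconst : ∀ u v : Fin n, x u = x v := by
    intro u v
    obtain ⟨p⟩ := hconn.preconnected u v
    induction p with
    | nil => rfl
    | cons h q ih => exact (hadj _ _ h).trans ih
  have hn0 : (0:ℕ) < n := by omega
  have hsum : ∑ k, x k = 0 := by
    have h2' : ((n : ℝ)⁻¹ * (∑ k, x k)^2) = 0 := hz.2
    have : (n : ℝ)⁻¹ ≠ 0 := by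
      simp [Nat.cast_ne_zero]; omega
    have := (mul_eq_zero.mp h2').resolve_left this
    exact pow_eq_zero_iff (n := 2) (by norm_num) |>.mp this
  have hx0 : x ⟨0, hn0⟩ = 0 := by
    have : ∑ k : Fin n, x k = n * x ⟨0, hn0⟩ := by
      rw [Finset.sum_congr rfl fun k _ => hconst k ⟨0, hn0⟩]
      simp [Finset.sum_const, mul_comm]
    rw [this] at hsum
    have hne : (n:ℝ) ≠ 0 := Nat.cast_ne_zero.mpr (by omega)
    exact (mul_eq_zero.mp hsum).resolve_left hne
  funext k
  rw [Pi.zero_apply, hconst k ⟨0, hn0⟩, hx0]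

lemma A_isUnit_det {n : ℕ} (hn : 2 ≤ n) (w : PairIdx n → ℝ) (hw : ∀ i, 0 ≤ w i)
    (hconn : (SimpleGraph.fromRel fun u v => ∃ i : PairIdx n,
        0 < w i ∧ (s(u, v) : Sym2 (Fin n)) = s(i.1.1, i.1.2)).Connected) :
    IsUnit (Lw w + Jmat n).det := by
  rw [isUnit_iff_ne_zero]
  intro hd
  obtain ⟨v, hv0, hv⟩ := (Matrix.exists_mulVec_eq_zero_iff).mpr hd
  exact hv0 (A_ker hn w hw hconn v hv)

end Aux

theorem stmt12 {n : ℕ} (hn : 2 ≤ n) (w : PairIdx n → ℝ) (hw : ∀ i, 0 ≤ w i)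
    (hconn : (SimpleGraph.fromRel fun u v => ∃ i : PairIdx n,
        0 < w i ∧ (s(u, v) : Sym2 (Fin n)) = s(i.1.1, i.1.2)).Connected)
    (i : PairIdx n) :
    Filter.Tendsto
      (fun ε : ℝ => (1 / ε) • (Rw (w + ε • (Pi.single i 1 : PairIdx n → ℝ)) - Rw w))
      (nhdsWithin 0 (Set.Ioi 0))
      (nhds (-(Matrix.vecMulVec (fun j => Rw w j i) (fun j => Rw w j i)))) := by
  classical
  set L := Lw w with hLdef
  set A := L + Jmat n with hAdef
  have hdet : IsUnit A.det := A_isUnit_det hn w hw hconn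
  have hmulinv : A * A⁻¹ = 1 := Matrix.mul_nonsing_inv A hdet
  have hinvmul : A⁻¹ * A = 1 := Matrix.nonsing_inv_mul A hdet
  set Q := A⁻¹ - Jmat n with hQdef
  have hJL : Jmat n * L = 0 := Jmat_mul_Lw w
  have hLJ : L * Jmat n = 0 := by
    have := congrArg Matrix.transpose hJL
    rw [Matrix.transpose_mul, Lw_transpose, Jmat_transpose] at this
    simpa using this
  have hn0 : 0 < n := by omega
  have hAJ : A * Jmat n = Jmat n := by
    rw [hAdef, Matrix.add_mul, hLJ, Jmat_mul_Jmat hn0, zero_add]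
  have hJA : Jmat n * A = Jmat n := by
    rw [hAdef, Matrix.mul_add, hJL, Jmat_mul_Jmat hn0, zero_add]
  have hiJ : A⁻¹ * Jmat n = Jmat n := by
    have h := congrArg (fun X => A⁻¹ * X) hAJ
    simpa [← Matrix.mul_assoc, hinvmul] using h.symm
  have hJi : Jmat n * A⁻¹ = Jmat n := by
    have h := congrArg (fun X => X * A⁻¹) hJA
    simpa [Matrix.mul_assoc, hmulinv] using h.symm
  have hAs : Aᵀ = A := by
    rw [hAdef, Matrix.transpose_add, Lw_transpose, Jmat_transpose]
  have hQs : Qᵀ = Q := by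
    rw [hQdef, Matrix.transpose_sub, Jmat_transpose, Matrix.transpose_nonsing_inv, hAs]
  have hLs : Lᵀ = L := Lw_transpose w
  have hLQ : L * Q = 1 - Jmat n := by
    rw [hQdef, Matrix.mul_sub, hLJ, sub_zero,
      show L = A - Jmat n from by rw [hAdef]; abel,
      Matrix.sub_mul, hmulinv, hJi]
  have hJQ : Jmat n * Q = 0 := by
    rw [hQdef, Matrix.mul_sub, hJi, Jmat_mul_Jmat hn0, sub_self]
  set b : Fin n → ℝ := fun k => incB n i k with hbdef
  have hJb : Jmat n *ᵥ b = 0 := Jmat_mulVec_incBrow i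
  set c : ℝ := b ⬝ᵥ (Q *ᵥ b) with hcdef
  -- c is nonnegative
  have hc0 : 0 ≤ c := by
    have hQb : Q *ᵥ b = A⁻¹ *ᵥ b := by
      rw [hQdef, Matrix.sub_mulVec, hJb, sub_zero]
    set y := A⁻¹ *ᵥ b with hydef
    have hAy : A *ᵥ y = b := by
      rw [hydef, Matrix.mulVec_mulVec, hmulinv, Matrix.one_mulVec]
    have : c = y ⬝ᵥ (A *ᵥ y) := by
      rw [hcdef, hQb, ← hAy]
      exact dotProduct_comm _ _
    rw [this]
    exact quadA_nonneg w hw y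
  -- pinv of the base Laplacian
  have hpinvL : pinv L = Q := by
    have h := penrose_shift L Q (Jmat n) b 0 c hLs hQs Jmat_transpose hLQ hJL hJQ hJb
      hcdef (by norm_num)
    simp only [zero_smul, add_zero, zero_div, sub_zero, zero_mul] at h
    exact pinv_eq_of h
  -- the column R_i
  set v : Fin n → ℝ := Q *ᵥ b with hvdef
  set Ri : PairIdx n → ℝ := fun j => Rw w j i with hRidef
  have hRi : incB n *ᵥ v = Ri := by
    funext j
    rw [hRidef]
    show (incB n *ᵥ v) j = Rw w j i
    rw [Rw, ← hLdef, hpinvL, hvdef, Matrix.mulVec_mulVec]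
    simp only [Matrix.mul_apply, Matrix.mulVec, dotProduct, Matrix.transpose_apply]
    rfl
  -- pinv of the perturbed Laplacian, for ε > 0
  have hformula : ∀ ε : ℝ, 0 < ε →
      Rw (w + ε • (Pi.single i 1 : PairIdx n → ℝ))
        = Rw w - (ε / (1 + ε * c)) • vecMulVec Ri Ri := by
    intro ε hε
    have hne : 1 + ε * c ≠ 0 := by nlinarith [mul_nonneg hε.le hc0]
    have hPen := penrose_shift L Q (Jmat n) b ε c hLs hQs Jmat_transpose hLQ hJL hJQ hJb
      hcdef hne
    have hLε : Lw (w + ε • (Pi.single i 1 : PairIdx n → ℝ)) = L + ε • vecMulVec b b := by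
      rw [Lw_add_single, hLdef, hbdef]
    have hpinvε : pinv (Lw (w + ε • (Pi.single i 1 : PairIdx n → ℝ)))
        = Q - (ε / (1 + ε * c)) • vecMulVec v v := by
      rw [hLε]
      exact pinv_eq_of hPen
    rw [Rw, hpinvε, Matrix.mul_sub, Matrix.sub_mul, Matrix.mul_smul, Matrix.smul_mul,
      mul_vecMulVec', vecMulVec_mul', Matrix.transpose_transpose, hRi]
    rw [Rw, ← hLdef, hpinvL]
  -- rewrite the difference quotient for ε > 0
  have hEq : ∀ ε ∈ Set.Ioi (0:ℝ),
      (1 / ε) • (Rw (w + ε • (Pi.single i 1 : PairIdx n → ℝ)) - Rw w)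
        = (-(1 + ε * c)⁻¹) • vecMulVec Ri Ri := by
    intro ε hε
    rw [hformula ε hε, sub_sub_cancel_left, smul_neg, smul_smul, ← neg_smul]
    congr 1
    have hεne : ε ≠ 0 := ne_of_gt hε
    have hne2 : 1 + ε * c ≠ 0 := by nlinarith [mul_nonneg hε.le hc0]
    field_simp
  have hlim : Filter.Tendsto
      (fun ε : ℝ => (-(1 + ε * c)⁻¹) • vecMulVec Ri Ri)
      (nhdsWithin 0 (Set.Ioi 0)) (nhds (-(vecMulVec Ri Ri))) := by
    have hs : Filter.Tendsto (fun ε : ℝ => -(1 + ε * c)⁻¹) (nhds 0) (nhds (-1)) := by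
      have hcont : ContinuousAt (fun ε : ℝ => -(1 + ε * c)⁻¹) 0 := by
        apply ContinuousAt.neg
        apply ContinuousAt.inv₀
        · fun_prop
        · norm_num
      simpa using hcont.tendsto
    have := (hs.mono_left (nhdsWithin_le_nhds (s := Set.Ioi (0:ℝ)))).smul_const
      (vecMulVec Ri Ri)
    simpa using this
  refine hlim.congr' ?_
  filter_upwards [self_mem_nhdsWithin] with ε hε
  exact (hEq ε hε).symm
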